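/- arXiv:2001.11255 — 2 statements merged into one kernel-verified Lean document; each statement's English description precedes it below -/
import Mathlib

section
/- Let E be a real inner product space, X ⊆ E, f₀ : E → ℝ, and let f₁, f₂ : E → ℝ be convex with f₂ differentiable on E. Suppose x₀ ∈ X satisfies f₁(x₀) − f₂(x₀) ≤ 0, and let f̃₂(x) = f₂(x₀) + ⟨∇f₂(x₀), x − x₀⟩. Let F = {x ∈ X : f₁(x) − f̃₂(x) ≤ 0} and suppose x* minimizes f₀ over F. Then: (1) x₀ ∈ F; (2) f₁(x*) − f₂(x*) ≤ 0, i.e., x* is feasible for the DC problem min{f₀(x) : x ∈ X, f₁(x) − f₂(x) ≤ 0}; (3) f₀(x*) ≤ f₀(x₀); and (4) f₀(x*) is an upper bound for the infimum of f₀ over {x ∈ X : f₁(x) − f₂(x) ≤ 0}. -/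

lemma convex_grad_ineq {E : Type*} [NormedAddCommGroup E] [InnerProductSpace ℝ E]
    [CompleteSpace E] {f : E → ℝ} (h : ConvexOn ℝ Set.univ f) (hd : Differentiable ℝ f)
    (x₀ x : E) : f x₀ + (inner ℝ (gradient f x₀) (x - x₀) : ℝ) ≤ f x := by
  set v := x - x₀ with hv
  have hg : ∀ t : ℝ, HasDerivAt (fun t : ℝ => f (x₀ + t • v)) ((fderiv ℝ f (x₀ + t • v)) v) t := by
    intro t
    have h1 : HasDerivAt (fun t : ℝ => x₀ + t • v) v t := by
      simpa using ((hasDerivAt_id t).smul_const v).const_add x₀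
    exact (hd (x₀ + t • v)).hasFDerivAt.comp_hasDerivAt t h1
  have hconv : ConvexOn ℝ Set.univ (fun t : ℝ => f (x₀ + t • v)) := by
    have heq : (fun t : ℝ => f (x₀ + t • v)) = f ∘ (AffineMap.lineMap x₀ x) := by
      funext t
      simp only [Function.comp_apply, AffineMap.lineMap_apply_module]
      congr 1
      simp [hv]
      module
    rw [heq]
    exact (h.comp_affineMap (AffineMap.lineMap x₀ x)).subset (by simp) convex_univ
  have key := hconv.le_slope_of_hasDerivAt (Set.mem_univ (0:ℝ)) (Set.mem_univ (1:ℝ))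
    one_pos (hg 0)
  have hslope : slope (fun t : ℝ => f (x₀ + t • v)) 0 1 = f x - f x₀ := by
    simp [slope, hv]
  rw [hslope] at key
  have hf0 : (fderiv ℝ f (x₀ + (0:ℝ) • v)) v = (inner ℝ (gradient f x₀) (x - x₀) : ℝ) := by
    simp only [zero_smul, add_zero, hv]
    rw [gradient]
    simp [InnerProductSpace.toDual_symm_apply]
  rw [hf0] at key
  linarith

/-- One iteration of the convex–concave procedure (Algorithm 1 of the paper):
if `x₀ ∈ X` is feasible for the DC constraint `f₁ − f₂ ≤ 0` and `x*` minimizes `f₀`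
over the convexified feasible set `F = {x ∈ X : f₁(x) − f̃₂(x) ≤ 0}` with
`f̃₂(x) = f₂(x₀) + ⟨∇f₂(x₀), x − x₀⟩`, then (1) `x₀ ∈ F`; (2) `x*` is feasible for the
DC problem; (3) `f₀(x*) ≤ f₀(x₀)`; (4) `f₀(x*)` upper-bounds the infimum of `f₀` over
the DC feasible set. -/
theorem ccp_single_iteration
    {E : Type*} [NormedAddCommGroup E] [InnerProductSpace ℝ E] [CompleteSpace E]
    (X : Set E) (f₀ f₁ f₂ : E → ℝ)
    (h₁ : ConvexOn ℝ Set.univ f₁) (h₂ : ConvexOn ℝ Set.univ f₂)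
    (hd : Differentiable ℝ f₂)
    (x₀ : E) (hx₀X : x₀ ∈ X) (hx₀feas : f₁ x₀ - f₂ x₀ ≤ 0)
    (xs : E)
    (hxsF : xs ∈ {x ∈ X | f₁ x - (f₂ x₀ + (inner ℝ (gradient f₂ x₀) (x - x₀) : ℝ)) ≤ 0})
    (hxsmin : ∀ y ∈ {x ∈ X | f₁ x - (f₂ x₀ + (inner ℝ (gradient f₂ x₀) (x - x₀) : ℝ)) ≤ 0},
      f₀ xs ≤ f₀ y) :
    x₀ ∈ {x ∈ X | f₁ x - (f₂ x₀ + (inner ℝ (gradient f₂ x₀) (x - x₀) : ℝ)) ≤ 0} ∧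
    f₁ xs - f₂ xs ≤ 0 ∧
    f₀ xs ≤ f₀ x₀ ∧
    ∀ m : ℝ, IsGLB (f₀ '' {x ∈ X | f₁ x - f₂ x ≤ 0}) m → m ≤ f₀ xs := by
  have hx0F : x₀ ∈ {x ∈ X | f₁ x - (f₂ x₀ + (inner ℝ (gradient f₂ x₀) (x - x₀) : ℝ)) ≤ 0} := by
    refine ⟨hx₀X, ?_⟩
    simpa using hx₀feas
  have hgrad := convex_grad_ineq h₂ hd x₀ xs
  have hfeas : f₁ xs - f₂ xs ≤ 0 := by
    have := hxsF.2
    linarith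
  refine ⟨hx0F, hfeas, hxsmin x₀ hx0F, ?_⟩
  intro m hm
  exact hm.1 ⟨xs, ⟨hxsF.1, hfeas⟩, rfl⟩
end

section
/- Let E be a real inner product space, X ⊆ E, f₀ : E → ℝ, and f₁, f₂ : E → ℝ convex with f₂ differentiable on E. Let (x_m)_{m ≥ 0} be a sequence in X such that f₁(x₀) − f₂(x₀) ≤ 0 and, for every m ≥ 1, x_m minimizes f₀ over {x ∈ X : f₁(x) ≤ f₂(x_{m−1}) + ⟨∇f₂(x_{m−1}), x − x_{m−1}⟩}. Then for every m ≥ 1, f₁(x_m) − f₂(x_m) ≤ 0 and f₀(x_m) ≤ f₀(x_{m−1}); in particular the sequence (f₀(x_m)) is non-increasing, and if f₀ is bounded below on X then (f₀(x_m)) converges. -/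
open Set

/-- Gradient inequality for convex differentiable functions. -/
lemma grad_ineq {E : Type*} [NormedAddCommGroup E] [InnerProductSpace ℝ E] [CompleteSpace E]
    {f : E → ℝ} (hc : ConvexOn ℝ Set.univ f) (hd : Differentiable ℝ f) (a b : E) :
    f a + (inner ℝ (gradient f a) (b - a) : ℝ) ≤ f b := by
  set g : ℝ → ℝ := fun t => f (a + t • (b - a)) with hg
  have hga : HasDerivAt g ((inner ℝ (gradient f a) (b - a) : ℝ)) 0 := by
    have h1 : HasDerivAt (fun t : ℝ => a + t • (b - a)) (b - a) 0 := by
      simpa using ((hasDerivAt_id (0 : ℝ)).smul_const (b - a)).const_add a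
    have h2 : HasFDerivAt f ((InnerProductSpace.toDual ℝ E) (gradient f a)) (a + (0:ℝ) • (b - a)) := by
      simpa using hasGradientAt_iff_hasFDerivAt.mp (hd a).hasGradientAt
    have h3 := h2.comp_hasDerivAt 0 h1
    simpa [hg, Function.comp_def] using h3
  have hconv : ConvexOn ℝ Set.univ g := by
    have := hc.comp_affineMap (AffineMap.lineMap a b : ℝ →ᵃ[ℝ] E)
    have heq : (f ∘ (AffineMap.lineMap a b : ℝ →ᵃ[ℝ] E)) = g := by
      funext t
      simp [hg, AffineMap.lineMap_apply, add_comm]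
    rw [heq] at this
    simpa using this
  have hs := hconv.le_slope_of_hasDerivAt (mem_univ (0:ℝ)) (mem_univ (1:ℝ)) one_pos hga
  have hslope : slope g 0 1 = f b - f a := by
    simp [slope_def_field, hg]
  rw [hslope] at hs
  linarith

/-- The iterated convex–concave procedure (Algorithm 1 of the paper): starting from
a feasible point of the DC-constrained problem, each iterate minimizes `f₀` over the
feasible set obtained by linearizing `f₂` at the previous iterate. Then every iterate
is feasible for the DC constraint, the objective values are non-increasing, and they
converge whenever `f₀` is bounded below on `X`. -/
theorem ccp_iterates
    {E : Type*} [NormedAddCommGroup E] [InnerProductSpace ℝ E] [CompleteSpace E]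
    (X : Set E) (f₀ f₁ f₂ : E → ℝ)
    (h₁ : ConvexOn ℝ Set.univ f₁) (h₂ : ConvexOn ℝ Set.univ f₂)
    (hd : Differentiable ℝ f₂)
    (x : ℕ → E) (hxX : ∀ m, x m ∈ X)
    (h0 : f₁ (x 0) - f₂ (x 0) ≤ 0)
    (hmem : ∀ m : ℕ,
      f₁ (x (m + 1)) ≤ f₂ (x m) + (inner ℝ (gradient f₂ (x m)) (x (m + 1) - x m) : ℝ))
    (hmin : ∀ m : ℕ, ∀ y ∈ X,
      f₁ y ≤ f₂ (x m) + (inner ℝ (gradient f₂ (x m)) (y - x m) : ℝ) →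
      f₀ (x (m + 1)) ≤ f₀ y) :
    (∀ m : ℕ, f₁ (x (m + 1)) - f₂ (x (m + 1)) ≤ 0 ∧ f₀ (x (m + 1)) ≤ f₀ (x m)) ∧
    Antitone (fun m : ℕ => f₀ (x m)) ∧
    (BddBelow (f₀ '' X) →
      ∃ c : ℝ, Filter.Tendsto (fun m : ℕ => f₀ (x m)) Filter.atTop (nhds c)) := by
  -- feasibility of every iterate
  have hfeas : ∀ m : ℕ, f₁ (x m) - f₂ (x m) ≤ 0 := by
    intro m
    induction m with
    | zero => exact h0
    | succ n _ =>
      have := (hmem n).trans (grad_ineq h₂ hd (x n) (x (n + 1)))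
      linarith
  -- descent
  have hdesc : ∀ m : ℕ, f₀ (x (m + 1)) ≤ f₀ (x m) := by
    intro m
    apply hmin m (x m) (hxX m)
    have : (inner ℝ (gradient f₂ (x m)) (x m - x m) : ℝ) = 0 := by simp
    rw [this]
    have := hfeas m
    linarith
  have hant : Antitone (fun m : ℕ => f₀ (x m)) :=
    antitone_nat_of_succ_le hdesc
  refine ⟨fun m => ⟨hfeas (m + 1), hdesc m⟩, hant, fun hbdd => ?_⟩
  have hbdd' : BddBelow (Set.range fun m : ℕ => f₀ (x m)) := by
    apply hbdd.mono
    rintro _ ⟨m, rfl⟩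
    exact ⟨x m, hxX m, rfl⟩
  exact ⟨_, tendsto_atTop_ciInf hant hbdd'⟩
end
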